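/- Let $T$ be a tree on $n \geq 2$ vertices whose bipartition classes are $A$ and $B$, and suppose every leaf of $T$ belongs to $A$. Then $|A| \geq |B|$. -/

import Mathlib

theorem stmt_11 {V : Type*} [Fintype V] [DecidableEq V]
    (T : SimpleGraph V) [DecidableRel T.Adj] (hT : T.IsTree)
    (hcard : 2 ≤ Fintype.card V) (A B : Finset V)
    (hdisj : Disjoint A B) (hcover : A ∪ B = Finset.univ)
    (hcolor : ∀ u v, T.Adj u v → (u ∈ A ∧ v ∈ B) ∨ (u ∈ B ∧ v ∈ A))
    (hleaf : ∀ v, T.degree v = 1 → v ∈ A) :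
    B.card ≤ A.card := by
  classical
  have hnotboth : ∀ v, v ∈ A → v ∈ B → False := fun v hA hB =>
    (Finset.disjoint_left.mp hdisj hA) hB
  have hAB : ∀ v : V, v ∈ A ∨ v ∈ B := by
    intro v
    have : v ∈ A ∪ B := hcover ▸ Finset.mem_univ v
    simpa [Finset.mem_union] using this
  -- each B-vertex has all neighbors in A (not B)
  have hnbr : ∀ v w, v ∈ B → T.Adj v w → w ∈ A := by
    intro v w hv h
    rcases hcolor v w h with ⟨h1, _⟩ | ⟨_, h2⟩
    · exact absurd hv (fun hv => hnotboth v h1 hv)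
    · exact h2
  -- the pairs (v, w) with v ∈ B adjacent to w
  set S : Finset (V × V) := (B ×ˢ Finset.univ).filter (fun p => T.Adj p.1 p.2) with hSdef
  have hScard : S.card = ∑ v ∈ B, T.degree v := by
    rw [Finset.card_eq_sum_card_fiberwise
      (f := fun p : V × V => p.1) (t := B)
      (fun p hp => (Finset.mem_product.mp (Finset.mem_filter.mp hp).1).1)]
    refine Finset.sum_congr rfl fun v hv => ?_
    have hfib : S.filter (fun p => p.1 = v) =
        (T.neighborFinset v).map ⟨fun w => (v, w), fun a b h => by simpa using h⟩ := by
      ext ⟨a, b⟩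
      simp only [hSdef, Finset.mem_filter, Finset.mem_product, Finset.mem_univ, and_true,
        Finset.mem_map, SimpleGraph.mem_neighborFinset, Function.Embedding.coeFn_mk,
        Prod.mk.injEq]
      constructor
      · rintro ⟨⟨hB, hadj⟩, rfl⟩
        exact ⟨b, hadj, rfl⟩
      · rintro ⟨w, hadj, rfl, rfl⟩
        exact ⟨⟨hv, hadj⟩, rfl⟩
    rw [hfib, Finset.card_map, SimpleGraph.degree]
  -- bijection S ↔ edges
  have hedge : S.card = T.edgeFinset.card := by
    refine Finset.card_bij (s := S) (t := T.edgeFinset) (fun p _ => Sym2.mk p.1 p.2) ?_ ?_ ?_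
    · intro p hp
      simp only [hSdef, Finset.mem_filter] at hp
      simpa [SimpleGraph.mem_edgeFinset] using hp.2
    · intro p hp q hq h
      simp only [hSdef, Finset.mem_filter, Finset.mem_product] at hp hq
      rcases Sym2.eq_iff.mp h with ⟨h1, h2⟩ | ⟨h1, h2⟩
      · exact Prod.ext h1 h2
      · exact absurd (h2 ▸ hnbr p.1 p.2 hp.1.1 hp.2) (fun hA => hnotboth q.1 hA hq.1.1)
    · intro e he
      rw [SimpleGraph.mem_edgeFinset] at he
      induction e with
      | _ u v =>
        rcases hAB u with hu | hu
        · refine ⟨(v, u), ?_, Sym2.eq_swap⟩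
          have hv : v ∈ B := by
            rcases hcolor u v he with ⟨-, h2⟩ | ⟨h1, -⟩
            · exact h2
            · exact absurd hu (fun hu => hnotboth u hu h1)
          simp [hSdef, hv, (T.mem_edgeSet.mp he).symm]
        · exact ⟨(u, v), by simp [hSdef, hu, T.mem_edgeSet.mp he], rfl⟩
  -- every B-vertex has degree ≥ 2
  have hdeg : ∀ v ∈ B, 2 ≤ T.degree v := by
    intro v hv
    have hpos : 0 < T.degree v := by
      rw [T.degree_pos_iff_exists_adj]
      obtain ⟨w, hw⟩ := Fintype.exists_ne_of_one_lt_card (by omega) v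
      obtain ⟨p⟩ := hT.isConnected v w
      have hp : ¬ p.Nil := SimpleGraph.Walk.not_nil_of_ne (Ne.symm hw)
      exact ⟨p.getVert 1, p.adj_snd hp⟩
    have hne1 : T.degree v ≠ 1 := fun hd => hnotboth v (hleaf v hd) hv
    omega
  have h2B : 2 * B.card ≤ ∑ v ∈ B, T.degree v := by
    calc 2 * B.card = ∑ _v ∈ B, 2 := by rw [Finset.sum_const, smul_eq_mul, mul_comm]
    _ ≤ ∑ v ∈ B, T.degree v := Finset.sum_le_sum hdeg
  have hE : T.edgeFinset.card + 1 = Fintype.card V := hT.card_edgeFinset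
  have hcardAB : A.card + B.card = Fintype.card V := by
    rw [← Finset.card_union_of_disjoint hdisj, hcover, Finset.card_univ]
  omega
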